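/- Equip ℝ^{n+4} (coordinates X₀, …, X_{n+3}) with the symmetric bilinear form (X,Y) = Σᵢ εⁱ XᵢYᵢ − X₀Y_{n+1} − X_{n+1}Y₀ − X_{n+2}Y_{n+3} − X_{n+3}Y_{n+2}, where εⁱ = ±1. For parameters (u, k, h, m) ∈ ℝⁿ × ℝⁿ × ℝ × ℝ define p(u, h) = (1, u¹, …, uⁿ, ½Σ_kε^k(u^k)², h, 0) and s(u, k, h, m) = (0, ε¹k₁, …, εⁿkₙ, Σᵢ kᵢuⁱ − h, m, 1). Then for any tangent vector with components (v, w, c, e) ∈ ℝⁿ × ℝⁿ × ℝ × ℝ, the pairing of s with the corresponding derivative of p is (s(u,k,h,m), Dp(u,h)[(v,c)]) = Σᵢ kᵢ vᵢ − c. In particular, the contact distribution on the (2n+1)-parameter family of lines spanned by p and s is given in this chart by the standard contact form Σᵢ kᵢ duⁱ − dh. -/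

import Mathlib

/-- The symmetric bilinear form
`(X,Y) = Σᵢ εⁱ XᵢYᵢ − X₀Y_{n+1} − X_{n+1}Y₀ − X_{n+2}Y_{n+3} − X_{n+3}Y_{n+2}`
on `ℝ^{n+4}`, realized as `ℝ × (Fin n → ℝ) × ℝ × ℝ × ℝ` with coordinates
`(X₀, X₁…Xₙ, X_{n+1}, X_{n+2}, X_{n+3})`. -/
noncomputable def formQ (n : ℕ) (ε : Fin n → ℝ)
    (X Y : ℝ × (Fin n → ℝ) × ℝ × ℝ × ℝ) : ℝ :=
  (∑ i : Fin n, ε i * X.2.1 i * Y.2.1 i) - X.1 * Y.2.2.1 - X.2.2.1 * Y.1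
    - X.2.2.2.1 * Y.2.2.2.2 - X.2.2.2.2 * Y.2.2.2.1

/-- With `p(u, h) = (1, u, ½Σε^k(u^k)², h, 0)` and
`s(u, k, h, m) = (0, ε¹k₁, …, εⁿkₙ, Σᵢkᵢuⁱ − h, m, 1)`, for any tangent vector
with components `(v, w, c, e)` the pairing of `s` with the corresponding
derivative of `p` is `(s, Dp(u,h)[(v,c)]) = Σᵢ kᵢvᵢ − c`. In particular, the
contact distribution on the `(2n+1)`-parameter family of lines spanned by `p`
and `s` is given in this chart by the standard contact form `Σᵢ kᵢ duⁱ − dh`. -/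
theorem stmt_9
    (n : ℕ) (ε : Fin n → ℝ) (hε : ∀ i, ε i = 1 ∨ ε i = -1)
    (p : ((Fin n → ℝ) × ℝ) → ℝ × (Fin n → ℝ) × ℝ × ℝ × ℝ)
    (hp : ∀ x : (Fin n → ℝ) × ℝ, p x =
      (1, x.1, (1 / 2) * ∑ k : Fin n, ε k * (x.1 k) ^ 2, x.2, 0))
    (u k : Fin n → ℝ) (hval m : ℝ)
    (s : ℝ × (Fin n → ℝ) × ℝ × ℝ × ℝ)
    (hs : s = (0, fun i => ε i * k i, (∑ i : Fin n, k i * u i) - hval, m, 1))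
    (v w : Fin n → ℝ) (c e : ℝ) :
    formQ n ε s (fderiv ℝ p (u, hval) (v, c)) = (∑ i : Fin n, k i * v i) - c := by
  have hp' : p = fun x : (Fin n → ℝ) × ℝ =>
      ((1:ℝ), x.1, (1 / 2) * ∑ k : Fin n, ε k * (x.1 k) ^ 2, x.2, (0:ℝ)) := funext hp
  subst hp' hs
  have h2 : HasFDerivAt (fun x : (Fin n → ℝ) × ℝ => (1/2) * ∑ j : Fin n, ε j * (x.1 j) ^ 2)
      ((1/2 : ℝ) • ∑ j : Fin n, (ε j) • ((2 * (u j) ^ 1) •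
        ((ContinuousLinearMap.proj j).comp
          (ContinuousLinearMap.fst ℝ (Fin n → ℝ) ℝ)))) (u, hval) := by
    have hsum : HasFDerivAt (fun x : (Fin n → ℝ) × ℝ => ∑ j : Fin n, ε j * (x.1 j) ^ 2)
        (∑ j : Fin n, (ε j) • ((2 * (u j) ^ 1) •
          ((ContinuousLinearMap.proj j).comp
            (ContinuousLinearMap.fst ℝ (Fin n → ℝ) ℝ)))) (u, hval) := by
      apply HasFDerivAt.fun_sum
      intro j _
      have hl : HasFDerivAt (fun x : (Fin n → ℝ) × ℝ => x.1 j)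
          ((ContinuousLinearMap.proj j).comp (ContinuousLinearMap.fst ℝ (Fin n → ℝ) ℝ))
          (u, hval) :=
        ((ContinuousLinearMap.proj j).comp (ContinuousLinearMap.fst ℝ (Fin n → ℝ) ℝ)).hasFDerivAt
      exact ((hasDerivAt_pow 2 (u j)).comp_hasFDerivAt (u, hval) hl).const_mul (ε j)
    exact hsum.const_mul (1/2)
  have H : HasFDerivAt (fun x : (Fin n → ℝ) × ℝ =>
      ((1:ℝ), x.1, (1 / 2) * ∑ k : Fin n, ε k * (x.1 k) ^ 2, x.2, (0:ℝ)))
      ((0 : ((Fin n → ℝ) × ℝ) →L[ℝ] ℝ).prod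
        ((ContinuousLinearMap.fst ℝ (Fin n → ℝ) ℝ).prod
          (((1/2 : ℝ) • ∑ j : Fin n, (ε j) • ((2 * (u j) ^ 1) •
            ((ContinuousLinearMap.proj j).comp
              (ContinuousLinearMap.fst ℝ (Fin n → ℝ) ℝ)))).prod
            ((ContinuousLinearMap.snd ℝ (Fin n → ℝ) ℝ).prod
              (0 : ((Fin n → ℝ) × ℝ) →L[ℝ] ℝ))))) (u, hval) :=
    HasFDerivAt.prodMk (hasFDerivAt_const _ _) (((ContinuousLinearMap.fst ℝ (Fin n → ℝ) ℝ).hasFDerivAt).prodMk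
      (h2.prodMk (((ContinuousLinearMap.snd ℝ (Fin n → ℝ) ℝ).hasFDerivAt).prodMk
        (hasFDerivAt_const _ _))))
  rw [H.fderiv]
  simp only [formQ, ContinuousLinearMap.prod_apply, ContinuousLinearMap.zero_apply,
    ContinuousLinearMap.coe_fst', ContinuousLinearMap.coe_snd', ContinuousLinearMap.smul_apply,
    ContinuousLinearMap.sum_apply, ContinuousLinearMap.coe_comp', Function.comp_apply,
    ContinuousLinearMap.proj_apply, smul_eq_mul]
  have hε2 : ∀ i, ε i * ε i = 1 := fun i => by rcases hε i with h | h <;> rw [h] <;> ring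
  have : ∀ i : Fin n, ε i * (ε i * k i) * v i = k i * v i := fun i => by
    calc ε i * (ε i * k i) * v i = (ε i * ε i) * (k i * v i) := by ring
    _ = k i * v i := by rw [hε2 i]; ring
  simp only [this]
  ring
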